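/- arXiv:1806.07625 — 2 statements merged into one kernel-verified Lean document; each statement's English description precedes it below -/
import Mathlib

section
/- A rooted phylogenetic network N is tree-child if and only if every node of N is visible. -/
open Relation

variable {V : Type*}

/-- Indegree of a node in a digraph given by an edge relation. -/
noncomputable def indeg (E : V → V → Prop) (v : V) : ℕ := Set.ncard {u | E u v}

/-- Outdegree of a node in a digraph given by an edge relation. -/
noncomputable def outdeg (E : V → V → Prop) (v : V) : ℕ := Set.ncard {w | E v w}

/-- A directed path from `x` to `y` in the digraph `E`, recorded as the list of its nodes. -/
def IsDirPathE (E : V → V → Prop) (x y : V) (p : List V) : Prop :=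
  p.head? = some x ∧ p.getLast? = some y ∧ p.Chain' E

/-- `Dom E root x y`: `x` is a dominator of `y`, i.e. `x` is an ancestor of `y` and every
directed path from `root` to `y` contains `x`. -/
def Dom (E : V → V → Prop) (root x y : V) : Prop :=
  Relation.TransGen E x y ∧ ∀ p, IsDirPathE E root y p → x ∈ p

/-- A rooted phylogenetic network: a rooted acyclic digraph with a unique root of indegree 0
and outdegree ≥ 1, in which every non-root node has indegree 1 or outdegree 1, and every node
is reachable from the root. -/
structure RPN (V : Type*) [Fintype V] where
  E : V → V → Prop
  root : V
  acyclic : ∀ v, ¬ Relation.TransGen E v v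
  root_indeg : indeg E root = 0
  root_outdeg : 1 ≤ outdeg E root
  degree_cond : ∀ v, v ≠ root → indeg E v = 1 ∨ outdeg E v = 1
  reachable : ∀ v, Relation.ReflTransGen E root v

namespace RPN

variable [Fintype V] (N : RPN V)

/-- A leaf: indegree 1 and outdegree 0. -/
def isLeaf (v : V) : Prop := indeg N.E v = 1 ∧ outdeg N.E v = 0

/-- A reticulate node: indegree at least 2. -/
def isRetic (v : V) : Prop := 2 ≤ indeg N.E v

/-- A tree node: the root, or a node of indegree 1 and outdegree at least 2. -/
def isTreeN (v : V) : Prop := v = N.root ∨ (indeg N.E v = 1 ∧ 2 ≤ outdeg N.E v)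

/-- A redundant node: indegree 1 and outdegree 1. -/
def isRedund (v : V) : Prop := indeg N.E v = 1 ∧ outdeg N.E v = 1

/-- A directed path from `x` to `y` in `N`. -/
def IsDirPath (x y : V) (p : List V) : Prop := IsDirPathE N.E x y p

/-- `x` lies on every directed path from the root to `y`. -/
def Dominates (x y : V) : Prop := ∀ p, N.IsDirPath N.root y p → x ∈ p

/-- A node is visible if it lies on every root-to-`ℓ` path for some leaf `ℓ`. -/
def Visible (x : V) : Prop := ∃ ℓ, N.isLeaf ℓ ∧ N.Dominates x ℓ

/-- Tree-child: every non-leaf node has a child that is a leaf, a tree node, or a redundant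
node. -/
def TreeChild : Prop :=
  ∀ u, ¬ N.isLeaf u → ∃ c, N.E u c ∧ (N.isLeaf c ∨ N.isTreeN c ∨ N.isRedund c)

/-- Edge of the subgraph induced by the tree nodes. -/
def treeE (u v : V) : Prop := N.E u v ∧ N.isTreeN u ∧ N.isTreeN v

/-- Undirected adjacency in the subgraph induced by the tree nodes. -/
def treeAdj (u v : V) : Prop := N.isTreeN u ∧ N.isTreeN v ∧ (N.E u v ∨ N.E v u)

/-- The tree-node component of a tree node `u`. -/
def treeComp (u : V) : Set V := {v | Relation.ReflTransGen N.treeAdj u v}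

/-- Edge of the subgraph induced by the reticulate nodes. -/
def reticE (u v : V) : Prop := N.E u v ∧ N.isRetic u ∧ N.isRetic v

/-- Undirected adjacency in the subgraph induced by the reticulate nodes. -/
def reticAdj (u v : V) : Prop := N.isRetic u ∧ N.isRetic v ∧ (N.E u v ∨ N.E v u)

/-- The reticulation component of a reticulate node `u`. -/
def reticComp (u : V) : Set V := {v | Relation.ReflTransGen N.reticAdj u v}

open Classical in
/-- The compression quotient map: each tree node is sent to its tree-node component, each
reticulate node to its reticulation component, and every other node to itself (as a
singleton set). -/
noncomputable def comp (u : V) : Set V :=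
  if N.isTreeN u then N.treeComp u else if N.isRetic u then N.reticComp u else {u}

/-- Edge relation of the compression `N̄`: an edge between the (distinct) images of the
endpoints of each edge of `N`. -/
def compE (A B : Set V) : Prop :=
  A ≠ B ∧ ∃ u v, N.E u v ∧ N.comp u = A ∧ N.comp v = B

/-- `N` is binary: reticulate nodes have indegree exactly 2, tree nodes outdegree exactly 2. -/
def Binary : Prop :=
  (∀ v, N.isRetic v → indeg N.E v = 2) ∧ (∀ v, N.isTreeN v → outdeg N.E v = 2)

/-- `N` is galled: every reticulate node `r` has a tree-node ancestor `w` with two internally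
disjoint directed paths from `w` to `r` in which all nodes except `r` are tree nodes. -/
def Galled : Prop :=
  ∀ r, N.isRetic r → ∃ w p q, N.isTreeN w ∧
    N.IsDirPath w r p ∧ N.IsDirPath w r q ∧ p ≠ q ∧
    (∀ x ∈ p.tail.dropLast, x ∉ q.tail.dropLast) ∧
    (∀ x ∈ p, x ≠ r → N.isTreeN x) ∧ (∀ x ∈ q, x ≠ r → N.isTreeN x)

/-- The spanning subgraph determined by a switching `s` choosing one parent of each
reticulate node. -/
def SpanE (s : V → V) (u v : V) : Prop := N.E u v ∧ (N.isRetic v → u = s v)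

/-- `S` is displayed (as a softwired cluster) at `u`: for some switching, the set of leaves
below `u` in the resulting spanning tree is exactly `S`. -/
def DisplayedAt (S : Set V) (u : V) : Prop :=
  ∃ s : V → V, (∀ v, N.isRetic v → N.E (s v) v) ∧
    {ℓ | N.isLeaf ℓ ∧ Relation.ReflTransGen (N.SpanE s) u ℓ} = S

/-- An isolated reticulate node: neither its parents nor its child are reticulate. -/
def IsolatedRetic (w : V) : Prop :=
  N.isRetic w ∧ (∀ x, N.E x w → ¬ N.isRetic x) ∧ (∀ y, N.E w y → ¬ N.isRetic y)

end RPN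

section Aux

variable {E : V → V → Prop}

lemma mem_of_getLast?' {p : List V} {y : V} (h : p.getLast? = some y) : y ∈ p := by
  cases p with
  | nil => simp at h
  | cons a t =>
    rw [List.getLast?_eq_getLast (List.cons_ne_nil a t)] at h
    exact (Option.some_inj.1 h) ▸ List.getLast_mem _

lemma chain'_pred :
    ∀ (p : List V) (r c : V), p.Chain' E → p.head? = some r → c ∈ p →
      c = r ∨ ∃ x ∈ p, E x c := by
  intro p
  induction p with
  | nil => intro r c _ _ h; simp at h
  | cons a t ih =>
    intro r c hch hh hm
    have har : a = r := by simpa using hh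
    rcases List.mem_cons.1 hm with h | h
    · exact Or.inl (h.trans har)
    · cases t with
      | nil => simp at h
      | cons b t' =>
        have hab : E a b := (List.isChain_cons_cons.1 hch).1
        have hch' : (b :: t').Chain' E := (List.isChain_cons_cons.1 hch).2
        rcases ih b c hch' rfl h with h' | ⟨x, hx, hxc⟩
        · exact Or.inr ⟨a, by simp, h' ▸ hab⟩
        · exact Or.inr ⟨x, List.mem_cons_of_mem _ hx, hxc⟩

lemma path_append {r p v : V} {q : List V}
    (hq : IsDirPathE E r p q) (he : E p v) : IsDirPathE E r v (q ++ [v]) := by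
  obtain ⟨h1, h2, h3⟩ := hq
  have hne : q ≠ [] := by intro h; rw [h] at h1; simp at h1
  refine ⟨?_, ?_, ?_⟩
  · cases q with
    | nil => exact absurd rfl hne
    | cons a t => simpa using h1
  · simp [List.getLast?_concat]
  · refine List.isChain_append.2 ⟨h3, List.isChain_singleton v, ?_⟩
    intro x hx y hy
    have hxp : p = x := by rw [h2] at hx; simpa using hx
    have hyv : v = y := by simpa using hy
    rw [← hxp, ← hyv]; exact he

lemma indeg_pos_of_edge [Fintype V] {u v : V} (h : E u v) : indeg E v ≠ 0 := by
  intro h0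
  have := Set.ncard_eq_zero (Set.toFinite {x | E x v}) |>.1 h0
  exact absurd this (by intro hs; exact (Set.eq_empty_iff_forall_notMem.1 hs) u h)

end Aux

lemma wf_transGen [Fintype V] (N : RPN V) : WellFounded (Relation.TransGen N.E) := by
  have h1 : IsTrans V (Relation.TransGen N.E) := ⟨fun a b c hab hbc => hab.trans hbc⟩
  have h2 : IsIrrefl V (Relation.TransGen N.E) := ⟨fun a h => N.acyclic a h⟩
  exact Finite.wellFounded_of_trans_of_irrefl _

lemma wf_transGen' [Fintype V] (N : RPN V) :
    WellFounded (fun a b : V => Relation.TransGen N.E b a) := by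
  have h1 : IsTrans V (fun a b : V => Relation.TransGen N.E b a) :=
    ⟨fun a b c hab hbc => hbc.trans hab⟩
  have h2 : IsIrrefl V (fun a b : V => Relation.TransGen N.E b a) :=
    ⟨fun a h => N.acyclic a h⟩
  exact Finite.wellFounded_of_trans_of_irrefl _

/-- `N` is tree-child iff every node of `N` is visible. -/
theorem stmt5 [Fintype V] (N : RPN V) :
    N.TreeChild ↔ ∀ v : V, N.Visible v := by
  constructor
  · -- tree-child → all visible
    intro htc
    have hwf : WellFounded (fun a b : V => N.E b a) :=
      Subrelation.wf (fun {a b} h => Relation.TransGen.single h) (wf_transGen' N)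
    intro v
    induction v using hwf.induction with
    | _ v ih =>
      by_cases hv : N.isLeaf v
      · exact ⟨v, hv, fun p hp => mem_of_getLast?' hp.2.1⟩
      · obtain ⟨c, hc, hcase⟩ := htc v hv
        have hdeg : indeg N.E c = 1 := by
          rcases hcase with h | h | h
          · exact h.1
          · rcases h with h | h
            · exact absurd (h ▸ N.root_indeg) (indeg_pos_of_edge hc)
            · exact h.1
          · exact h.1
        obtain ⟨ℓ, hℓ, hdom⟩ := ih c hc
        refine ⟨ℓ, hℓ, fun p hp => ?_⟩
        have hcmem := hdom p hp
        have hcr : c ≠ N.root := by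
          intro h
          subst h
          rw [N.root_indeg] at hdeg
          exact one_ne_zero hdeg.symm
        rcases chain'_pred p N.root c hp.2.2 hp.1 hcmem with h | ⟨x, hx, hxc⟩
        · exact absurd h hcr
        · obtain ⟨a, ha⟩ := Set.ncard_eq_one.1 hdeg
          have h1 : x ∈ ({a} : Set V) := ha ▸ hxc
          have h2 : v ∈ ({a} : Set V) := ha ▸ hc
          simp only [Set.mem_singleton_iff] at h1 h2
          rw [h1, ← h2] at hx
          exact hx
  · -- all visible → tree-child
    intro hvis u hu
    by_contra hno
    push_neg at hno
    obtain ⟨ℓ, hℓ, hdom⟩ := hvis u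
    set D : Set V := {v | v ≠ u ∧ N.Dominates u v} with hD
    have hℓD : ℓ ∈ D := ⟨fun h => hu (h ▸ hℓ), hdom⟩
    obtain ⟨v, hvD, hmin⟩ := (wf_transGen N).has_min D ⟨ℓ, hℓD⟩
    obtain ⟨hvu, hvdom⟩ := hvD
    have hvroot : v ≠ N.root := by
      intro h
      have hpath : N.IsDirPath N.root v [N.root] := by
        simp only [RPN.IsDirPath, IsDirPathE]
        exact ⟨by simp, by simp [h], List.isChain_singleton _⟩
      have := hvdom [N.root] hpath
      simp at this
      exact hvu (h.trans this.symm)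
    have hpar : ∀ p, N.E p v → p = u := by
      intro p hp
      by_contra hpu
      by_cases hpD : p ∈ D
      · exact hmin p hpD (Relation.TransGen.single hp)
      · have hnd : ¬ N.Dominates u p := fun h => hpD ⟨hpu, h⟩
        rw [RPN.Dominates] at hnd
        push_neg at hnd
        obtain ⟨q, hq, hqu⟩ := hnd
        have hq' : N.IsDirPath N.root v (q ++ [v]) := path_append hq hp
        have := hvdom _ hq'
        rcases List.mem_append.1 this with h | h
        · exact hqu h
        · simp only [List.mem_singleton] at h
          exact hvu h.symm
    -- v has a parent
    have hpar_ex : ∃ p, N.E p v := by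
      rcases (N.reachable v).cases_tail with h | ⟨c, _, hc⟩
      · exact absurd h hvroot
      · exact ⟨c, hc⟩
    obtain ⟨p₀, hp₀⟩ := hpar_ex
    have hp₀u : p₀ = u := hpar _ hp₀
    have huv : N.E u v := hp₀u ▸ hp₀
    have hset : {x | N.E x v} = {u} := by
      ext x
      simp only [Set.mem_setOf_eq, Set.mem_singleton_iff]
      exact ⟨fun h => hpar x h, fun h => h ▸ huv⟩
    have hindeg : indeg N.E v = 1 := by rw [indeg, hset, Set.ncard_singleton]
    have hnv := hno v huv
    rcases h : outdeg N.E v with _ | n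
    · exact hnv.1 ⟨hindeg, h⟩
    · rcases n with _ | n
      · exact hnv.2.2 ⟨hindeg, h⟩
      · exact hnv.2.1 (Or.inr ⟨hindeg, by omega⟩)
end

section
/- The compression of a tree-based rooted phylogenetic network is tree-based: if there is a set E of reticulate edges of N such that (V(N), E(N)∖E) is a tree with the same leaf set as N, then there is a set of reticulate edges of the compression N̄ whose removal yields a spanning tree of N̄ with the same leaf set. -/
open Relation

variable {V : Type*}

namespace RPN

variable [Fintype V] (N : RPN V)

/-- Rank of a node: number of strict ancestors. -/
noncomputable def rkk (v : V) : ℕ := Set.ncard {u | Relation.TransGen N.E u v}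

lemma rkk_lt {p w : V} (h : N.E p w) : N.rkk p < N.rkk w := by
  apply Set.ncard_lt_ncard _ (Set.toFinite _)
  rw [Set.ssubset_def]
  constructor
  · intro x hx; exact Relation.TransGen.tail hx h
  · intro hsub
    exact N.acyclic p (hsub (Relation.TransGen.single h))

lemma treeAdj_symm : Symmetric N.treeAdj := fun _ _ h => ⟨h.2.1, h.1, h.2.2.symm⟩

lemma reticAdj_symm : Symmetric N.reticAdj := fun _ _ h => ⟨h.2.1, h.1, h.2.2.symm⟩

lemma mem_comp_self (u : V) : u ∈ N.comp u := by
  unfold comp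
  split_ifs with h1 h2
  · exact Relation.ReflTransGen.refl
  · exact Relation.ReflTransGen.refl
  · exact Set.mem_singleton u

lemma not_retic_of_treeN {v : V} (h : N.isTreeN v) : ¬ N.isRetic v := by
  intro hr
  unfold isRetic at hr
  rcases h with h | ⟨h1, _⟩
  · rw [h, N.root_indeg] at hr; omega
  · rw [h1] at hr; omega

lemma isTreeN_of_mem_treeComp {u v : V} (hu : N.isTreeN u) (hv : v ∈ N.treeComp u) :
    N.isTreeN v := by
  induction hv with
  | refl => exact hu
  | tail _ h _ => exact h.2.1

lemma isRetic_of_mem_reticComp {u v : V} (hu : N.isRetic u) (hv : v ∈ N.reticComp u) :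
    N.isRetic v := by
  induction hv with
  | refl => exact hu
  | tail _ h _ => exact h.2.1

lemma treeComp_eq_of_mem {u v : V} (hv : v ∈ N.treeComp u) : N.treeComp v = N.treeComp u := by
  have hvu : Relation.ReflTransGen N.treeAdj v u :=
    (@Std.Symm.symm _ _ (@Relation.ReflTransGen.stdSymm _ _ ⟨N.treeAdj_symm⟩) _ _ hv)
  ext x
  exact ⟨fun hx => Relation.ReflTransGen.trans hv hx,
    fun hx => Relation.ReflTransGen.trans hvu hx⟩

lemma reticComp_eq_of_mem {u v : V} (hv : v ∈ N.reticComp u) : N.reticComp v = N.reticComp u := by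
  have hvu : Relation.ReflTransGen N.reticAdj v u :=
    (@Std.Symm.symm _ _ (@Relation.ReflTransGen.stdSymm _ _ ⟨N.reticAdj_symm⟩) _ _ hv)
  ext x
  exact ⟨fun hx => Relation.ReflTransGen.trans hv hx,
    fun hx => Relation.ReflTransGen.trans hvu hx⟩

lemma comp_eq_of_mem {u v : V} (hv : v ∈ N.comp u) : N.comp v = N.comp u := by
  unfold comp at hv ⊢
  by_cases ht : N.isTreeN u
  · rw [if_pos ht] at hv
    have htv := N.isTreeN_of_mem_treeComp ht hv
    rw [if_pos htv, if_pos ht]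
    exact N.treeComp_eq_of_mem hv
  · rw [if_neg ht] at hv
    by_cases hr : N.isRetic u
    · rw [if_pos hr] at hv
      have hrv := N.isRetic_of_mem_reticComp hr hv
      rw [if_neg (fun h => N.not_retic_of_treeN h hrv), if_pos hrv, if_neg ht, if_pos hr]
      exact N.reticComp_eq_of_mem hv
    · rw [if_neg hr] at hv
      rw [Set.mem_singleton_iff] at hv
      rw [hv]

lemma comp_leaf {ℓ : V} (h : N.isLeaf ℓ) : N.comp ℓ = {ℓ} := by
  unfold comp
  rw [if_neg, if_neg]
  · unfold isRetic; rw [h.1]; omega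
  · intro hc
    rcases hc with hc | ⟨_, h2⟩
    · have h1 := h.1; rw [hc, N.root_indeg] at h1; omega
    · rw [h.2] at h2; omega

lemma root_mem_comp {v : V} (hv : N.root ∈ N.comp v) : N.comp v = N.comp N.root :=
  (N.comp_eq_of_mem hv).symm

lemma ne_root_of_mem {u v : V} (hA : N.comp u ≠ N.comp N.root) (hv : v ∈ N.comp u) :
    v ≠ N.root := by
  intro h
  exact hA (N.root_mem_comp (h ▸ hv))

lemma retic_ne_root {v : V} (h : N.isRetic v) : v ≠ N.root := by
  intro hv
  unfold isRetic at h
  rw [hv, N.root_indeg] at h; omega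

lemma outdeg_one_of_retic {v : V} (h : N.isRetic v) : outdeg N.E v = 1 := by
  rcases N.degree_cond v (N.retic_ne_root h) with h1 | h1
  · exact absurd h (by unfold isRetic; omega)
  · exact h1

lemma retic_child_unique {v w w' : V} (h : N.isRetic v) (h1 : N.E v w) (h2 : N.E v w') :
    w = w' := by
  have := N.outdeg_one_of_retic h
  unfold outdeg at this
  obtain ⟨a, ha⟩ := Set.ncard_eq_one.mp this
  have e1 : w ∈ {w | N.E v w} := h1
  have e2 : w' ∈ {w | N.E v w} := h2
  rw [ha] at e1 e2
  rw [Set.mem_singleton_iff.mp e1, Set.mem_singleton_iff.mp e2]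

lemma retic_not_leaf {v : V} (h : N.isRetic v) : ¬ N.isLeaf v := by
  intro hl; unfold isRetic at h; rw [hl.1] at h; omega

lemma leaf_no_out {v w : V} (h : N.isLeaf v) : ¬ N.E v w := by
  intro he
  have h0 := h.2
  unfold outdeg at h0
  have : {w | N.E v w} = ∅ := (Set.ncard_eq_zero (Set.toFinite _)).mp h0
  exact absurd he (by rw [Set.eq_empty_iff_forall_notMem] at this; exact this w)

/-- Adjacency within a component, uniform version. -/
def Radj (x y : V) : Prop := N.treeAdj x y ∨ N.reticAdj x y

lemma Radj_symm : Symmetric N.Radj := fun _ _ h =>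
  h.elim (fun h => Or.inl (N.treeAdj_symm h)) (fun h => Or.inr (N.reticAdj_symm h))

lemma mem_comp_of_Radj {x y : V} (hx : x ∈ N.comp x) (h : N.Radj x y) : y ∈ N.comp x := by
  unfold comp
  rcases h with h | h
  · rw [if_pos h.1]; exact Relation.ReflTransGen.single h
  · rw [if_neg (fun ht => N.not_retic_of_treeN ht h.1), if_pos h.1]
    exact Relation.ReflTransGen.single h

lemma radj_closed {u x y : V} (hx : x ∈ N.comp u) (h : N.Radj x y) : y ∈ N.comp u := by
  have := N.mem_comp_of_Radj (N.mem_comp_self x) h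
  rw [N.comp_eq_of_mem hx] at this
  exact this

lemma rtg_radj_of_mem {u v w : V} (hv : v ∈ N.comp u) (hw : w ∈ N.comp u) :
    Relation.ReflTransGen N.Radj v w := by
  have key : ∀ x, x ∈ N.comp u → Relation.ReflTransGen N.Radj u x := by
    intro x hx
    unfold comp at hx
    split_ifs at hx with h1 h2
    · exact Relation.ReflTransGen.mono (r := N.treeAdj) (p := N.Radj) (fun a b h => Or.inl h) _ _ hx
    · exact Relation.ReflTransGen.mono (r := N.reticAdj) (p := N.Radj) (fun a b h => Or.inr h) _ _ hx
    · rw [Set.mem_singleton_iff] at hx; rw [hx]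
  exact Relation.ReflTransGen.trans
    ((@Std.Symm.symm _ _ (@Relation.ReflTransGen.stdSymm _ _ ⟨N.Radj_symm⟩) _ _ (key v hv))) (key w hw)

end RPN



/-- The compression of a tree-based network is tree-based: if removing a set
`Edel` of reticulate edges of `N` yields a spanning tree with the same leaf set as `N`, then
some set `Fdel` of reticulate edges of the compression can be removed to yield a spanning
tree of the compression with the same leaf set. -/
theorem stmt12 [Fintype V] (N : RPN V) (Edel : Set (V × V))
    (hre : ∀ e ∈ Edel, N.E e.1 e.2 ∧ N.isRetic e.2)
    (hT : ∀ v, v ≠ N.root → Set.ncard {u | N.E u v ∧ (u, v) ∉ Edel} = 1)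
    (hreach : ∀ v, Relation.ReflTransGen (fun a b => N.E a b ∧ (a, b) ∉ Edel) N.root v)
    (hleaf : {v | ∀ w, ¬ (N.E v w ∧ (v, w) ∉ Edel)} = {v | N.isLeaf v}) :
    ∃ Fdel : Set (Set V × Set V),
      (∀ e ∈ Fdel, N.compE e.1 e.2 ∧ 2 ≤ Set.ncard {B | N.compE B e.2}) ∧
      (∀ A ∈ Set.range N.comp, A ≠ N.comp N.root →
        Set.ncard {B | N.compE B A ∧ (B, A) ∉ Fdel} = 1) ∧
      (∀ A ∈ Set.range N.comp,
        Relation.ReflTransGen (fun X Y => N.compE X Y ∧ (X, Y) ∉ Fdel) (N.comp N.root) A) ∧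
      {A | A ∈ Set.range N.comp ∧ ∀ B, ¬ (N.compE A B ∧ (A, B) ∉ Fdel)}
        = N.comp '' {v | N.isLeaf v} := by
  classical
  set kE : V → V → Prop := fun a b => N.E a b ∧ (a, b) ∉ Edel with hkEdef
  -- the unique kept parent of each non-root node
  have htpex : ∀ v : V, ∃ a, v ≠ N.root → {u | kE u v} = {a} := by
    intro v
    by_cases h : v = N.root
    · exact ⟨N.root, fun h' => absurd h h'⟩
    · obtain ⟨a, ha⟩ := Set.ncard_eq_one.mp (hT v h)
      exact ⟨a, fun _ => ha⟩
  choose tp htp using htpex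
  have htp1 : ∀ v : V, v ≠ N.root → kE (tp v) v := by
    intro v hv
    have h := htp v hv
    have : tp v ∈ {u | kE u v} := by rw [h]; rfl
    exact this
  have htp2 : ∀ v u : V, v ≠ N.root → kE u v → u = tp v := by
    intro v u hv hu
    have h := htp v hv
    have : u ∈ {u | kE u v} := hu
    rw [h] at this
    exact this
  -- every non-leaf has a kept outgoing edge
  have hout : ∀ v : V, ¬ N.isLeaf v → ∃ w, kE v w := by
    intro v hv
    by_contra hc
    push_neg at hc
    have hmem : v ∈ {v | ∀ w, ¬ (N.E v w ∧ (v, w) ∉ Edel)} := fun w hw => (hc w) hw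
    rw [hleaf] at hmem
    exact hv hmem
  -- edges into non-reticulate nodes are kept
  have hknr : ∀ {v w : V}, ¬ N.isRetic w → N.E v w → kE v w := by
    intro v w hw he
    exact ⟨he, fun hmem => hw (hre _ hmem).2⟩
  -- edges out of reticulate nodes are kept
  have hkr : ∀ {v w : V}, N.isRetic v → N.E v w → kE v w := by
    intro v w hv he
    obtain ⟨w', hw'⟩ := hout v (N.retic_not_leaf hv)
    rwa [N.retic_child_unique hv he hw'.1]
  -- component adjacency yields a kept edge
  have hAdjK : ∀ {x y : V}, N.Radj x y → kE x y ∨ kE y x := by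
    intro x y h
    rcases h with ⟨hx, hy, he | he⟩ | ⟨hx, hy, he | he⟩
    · exact Or.inl (hknr (N.not_retic_of_treeN hy) he)
    · exact Or.inr (hknr (N.not_retic_of_treeN hx) he)
    · exact Or.inl (hkr hx he)
    · exact Or.inr (hkr hy he)
  -- uniqueness of the entry node of a non-root component
  have hENT : ∀ (u₀ : V), N.comp u₀ ≠ N.comp N.root →
      ∀ v ∈ N.comp u₀, ∀ w ∈ N.comp u₀,
      tp v ∉ N.comp u₀ → tp w ∉ N.comp u₀ → v = w := by
    intro u₀ hA
    set A := N.comp u₀ with hAdef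
    have hner : ∀ x ∈ A, x ≠ N.root := fun x hx => N.ne_root_of_mem hA hx
    set Down : V → V → Prop := fun x y => y ∈ A ∧ x ∈ A ∧ tp y = x with hD
    have hDrk : ∀ {x y}, Down x y → N.rkk x < N.rkk y := by
      rintro x y ⟨hy, hx, ht⟩
      exact ht ▸ N.rkk_lt (htp1 y (hner y hy)).1
    have hclos : ∀ {x y : V}, x ∈ A → Relation.ReflTransGen N.Radj x y → y ∈ A := by
      intro x y hx h
      induction h with
      | refl => exact hx
      | tail _ h ih => exact N.radj_closed ih h
    have claim2 : ∀ n, ∀ v, N.rkk v ≤ n → ∀ e1 e2,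
        tp e1 ∉ A → tp e2 ∉ A →
        Relation.ReflTransGen Down e1 v → Relation.ReflTransGen Down e2 v → e1 = e2 := by
      intro n
      induction n with
      | zero =>
        intro v hrk e1 e2 h1 h2 r1 r2
        rcases Relation.ReflTransGen.cases_tail r1 with h | ⟨c, hc, hd⟩
        · rcases Relation.ReflTransGen.cases_tail r2 with h' | ⟨c', hc', hd'⟩
          · rw [← h, ← h']
          · have := hDrk hd'; omega
        · have := hDrk hd; omega
      | succ n ih =>
        intro v hrk e1 e2 h1 h2 r1 r2
        rcases Relation.ReflTransGen.cases_tail r1 with h | ⟨c, hc, hd⟩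
        · rcases Relation.ReflTransGen.cases_tail r2 with h' | ⟨c', hc', hd'⟩
          · rw [← h, ← h']
          · exfalso
            have htv : tp v ∈ A := by rw [hd'.2.2]; exact hd'.2.1
            rw [h] at htv
            exact h1 htv
        · rcases Relation.ReflTransGen.cases_tail r2 with h' | ⟨c', hc', hd'⟩
          · exfalso
            have htv : tp v ∈ A := by rw [hd.2.2]; exact hd.2.1
            rw [h'] at htv
            exact h2 htv
          · have hcv : c = tp v := hd.2.2.symm
            have hcv' : c' = tp v := hd'.2.2.symm
            have hlt : N.rkk (tp v) < N.rkk v := by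
              have := hDrk hd; rw [hcv] at this; exact this
            rw [hcv] at hc
            rw [hcv'] at hc'
            exact ih (tp v) (by omega) e1 e2 h1 h2 hc hc'
    have claim3 : ∀ a b : V, Relation.ReflTransGen N.Radj a b → a ∈ A →
        ∀ e, tp e ∉ A → Relation.ReflTransGen Down e a →
        Relation.ReflTransGen Down e b := by
      intro a b hab
      induction hab with
      | refl => intro ha e he hr; exact hr
      | @tail x y hax hxy ih =>
        intro ha e he hr
        have hx : x ∈ A := hclos ha hax
        have hy : y ∈ A := N.radj_closed hx hxy
        have hr' := ih ha e he hr
        rcases hAdjK hxy with hk | hk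
        · have hxy' : x = tp y := htp2 y x (hner y hy) hk
          exact hr'.tail ⟨hy, hx, hxy'.symm⟩
        · have hty : y = tp x := htp2 x y (hner x hx) hk
          rcases Relation.ReflTransGen.cases_tail hr' with h | ⟨c, hc, hd⟩
          · exfalso
            rw [← h] at he
            exact he (hty ▸ hy)
          · have hcy : c = y := by rw [← hd.2.2, ← hty]
            rwa [hcy] at hc
    intro v hv w hw h1 h2
    have hvw := N.rtg_radj_of_mem hv hw
    have hr := claim3 v w hvw hv v h1 Relation.ReflTransGen.refl
    exact claim2 (N.rkk w) w le_rfl v w h1 h2 hr Relation.ReflTransGen.refl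
  -- choose a minimal-rank element of each component
  have hw0ex : ∀ A : Set V, ∃ w, (∃ u, N.comp u = A) →
      (w ∈ A ∧ ∀ b ∈ A, N.rkk w ≤ N.rkk b) := by
    intro A
    by_cases h : ∃ u, N.comp u = A
    · obtain ⟨u, rfl⟩ := h
      obtain ⟨w, hwA, hmin⟩ := Set.exists_min_image (N.comp u) N.rkk (Set.toFinite _)
        ⟨u, N.mem_comp_self u⟩
      exact ⟨w, fun _ => ⟨hwA, hmin⟩⟩
    · exact ⟨N.root, fun h' => absurd h' h⟩
  choose w0 hw0 using hw0ex
  set F : Set (Set V × Set V) := {e : Set V × Set V | N.compE e.1 e.2 ∧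
    e.2 ≠ N.comp N.root ∧ (∃ u, N.comp u = e.2) ∧
    e.1 ≠ N.comp (tp (w0 e.2))} with hFdef
  -- key properties of the chosen edge into each non-root component
  have hkey : ∀ A : Set V, (∃ u, N.comp u = A) → A ≠ N.comp N.root →
      w0 A ∈ A ∧ tp (w0 A) ∉ A ∧ kE (tp (w0 A)) (w0 A) ∧
      N.compE (N.comp (tp (w0 A))) A ∧ (N.comp (tp (w0 A)), A) ∉ F := by
    intro A hr hne
    obtain ⟨hmem, hmin⟩ := hw0 A hr
    obtain ⟨u, hu⟩ := hr
    have hner : w0 A ≠ N.root := by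
      subst hu; exact N.ne_root_of_mem hne hmem
    have hk : kE (tp (w0 A)) (w0 A) := htp1 _ hner
    have hnm : tp (w0 A) ∉ A := by
      intro hmem'
      have h1 := hmin _ hmem'
      have h2 := N.rkk_lt hk.1
      omega
    have hcw : N.comp (w0 A) = A := by subst hu; exact N.comp_eq_of_mem hmem
    have hcE : N.compE (N.comp (tp (w0 A))) A := by
      refine ⟨?_, tp (w0 A), w0 A, hk.1, rfl, hcw⟩
      intro heq
      apply hnm
      have hms := N.mem_comp_self (tp (w0 A))
      rw [heq] at hms
      exact hms
    refine ⟨hmem, hnm, hk, hcE, ?_⟩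
    intro hmem''
    simp only [hFdef, Set.mem_setOf_eq] at hmem''
    exact hmem''.2.2.2 rfl
  -- the entry lemma
  have hentry : ∀ {m w : V}, kE m w → m ∉ N.comp w → N.comp w ≠ N.comp N.root →
      N.comp m = N.comp (tp (w0 (N.comp w))) := by
    intro m w hk hm hne
    have hwmem : w ∈ N.comp w := N.mem_comp_self w
    have hwne : w ≠ N.root := N.ne_root_of_mem hne hwmem
    have htpw : tp w = m := (htp2 w m hwne hk).symm
    obtain ⟨hmem, hnm, _, _, _⟩ := hkey (N.comp w) ⟨w, rfl⟩ hne
    have hww : w = w0 (N.comp w) :=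
      hENT w hne w hwmem (w0 (N.comp w)) hmem (htpw ▸ hm) hnm
    rw [← hww, htpw]
  refine ⟨F, ?_, ?_, ?_, ?_⟩
  · -- condition 1
    rintro ⟨B, A⟩ he
    simp only [hFdef, Set.mem_setOf_eq] at he
    obtain ⟨hcE, hne, hrg, hnp⟩ := he
    refine ⟨hcE, ?_⟩
    obtain ⟨_, _, _, hcE', _⟩ := hkey A hrg hne
    have hsub : ({B, N.comp (tp (w0 A))} : Set (Set V)) ⊆ {B' | N.compE B' A} := by
      intro X hX
      rcases hX with rfl | hX
      · exact hcE
      · rw [Set.mem_singleton_iff] at hX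
        rw [hX]
        exact hcE'
    calc 2 = ({B, N.comp (tp (w0 A))} : Set (Set V)).ncard := (Set.ncard_pair hnp).symm
      _ ≤ _ := Set.ncard_le_ncard hsub (Set.toFinite _)
  · -- condition 2
    intro A hrg hne
    have hrg' : ∃ u, N.comp u = A := hrg
    obtain ⟨_, _, _, hcE', hnF⟩ := hkey A hrg' hne
    have h1 : {B | N.compE B A ∧ (B, A) ∉ F} = {N.comp (tp (w0 A))} := by
      ext B
      simp only [Set.mem_setOf_eq, Set.mem_singleton_iff]
      constructor
      · rintro ⟨hcE, hnF'⟩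
        by_contra hne'
        apply hnF'
        simp only [hFdef, Set.mem_setOf_eq]
        exact ⟨hcE, hne, hrg', hne'⟩
      · rintro rfl
        exact ⟨hcE', hnF⟩
    rw [h1, Set.ncard_singleton]
  · -- condition 3
    intro A hrg
    obtain ⟨v, rfl⟩ := hrg
    have main : ∀ n, ∀ v : V, N.rkk v ≤ n →
        Relation.ReflTransGen (fun X Y => N.compE X Y ∧ (X, Y) ∉ F)
          (N.comp N.root) (N.comp v) := by
      intro n
      induction n with
      | zero =>
        intro v hrk
        by_cases h : N.comp v = N.comp N.root
        · rw [h]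
        · exfalso
          obtain ⟨hmem, hnm, hk, _, _⟩ := hkey (N.comp v) ⟨v, rfl⟩ h
          have h1 := N.rkk_lt hk.1
          have h2 := (hw0 (N.comp v) ⟨v, rfl⟩).2 v (N.mem_comp_self v)
          omega
      | succ n ih =>
        intro v hrk
        by_cases h : N.comp v = N.comp N.root
        · rw [h]
        · obtain ⟨hmem, hnm, hk, hcE, hnF⟩ := hkey (N.comp v) ⟨v, rfl⟩ h
          have h1 := N.rkk_lt hk.1
          have h2 := (hw0 (N.comp v) ⟨v, rfl⟩).2 v (N.mem_comp_self v)
          have hih := ih (tp (w0 (N.comp v))) (by omega)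
          exact hih.tail ⟨hcE, hnF⟩
    exact main (N.rkk v) v le_rfl
  · -- condition 4
    ext A
    simp only [Set.mem_setOf_eq, Set.mem_image]
    constructor
    · rintro ⟨⟨u, rfl⟩, hnoout⟩
      by_cases hL : ∃ ℓ ∈ N.comp u, N.isLeaf ℓ
      · obtain ⟨ℓ, hm, hl⟩ := hL
        exact ⟨ℓ, hl, N.comp_eq_of_mem hm⟩
      · exfalso
        push_neg at hL
        obtain ⟨m, hmA, hmax⟩ := Set.exists_max_image (N.comp u) N.rkk (Set.toFinite _)
          ⟨u, N.mem_comp_self u⟩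
        obtain ⟨w, hw⟩ := hout m (hL m hmA)
        have hwn : w ∉ N.comp u := by
          intro hmem
          have h1 := hmax w hmem
          have h2 := N.rkk_lt hw.1
          omega
        have hcomp : N.comp w ≠ N.comp u := fun h => hwn (h ▸ N.mem_comp_self w)
        have hcm : N.comp m = N.comp u := N.comp_eq_of_mem hmA
        apply hnoout (N.comp w)
        constructor
        · exact ⟨fun h => hcomp h.symm, m, w, hw.1, hcm, rfl⟩
        · intro hF
          simp only [hFdef, Set.mem_setOf_eq] at hF
          obtain ⟨_, hne, _, hnp⟩ := hF
          have hmnw : m ∉ N.comp w := by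
            intro h
            exact hcomp ((N.comp_eq_of_mem h).symm.trans hcm)
          have hent := hentry hw hmnw hne
          apply hnp
          rw [← hcm]
          exact hent
    · rintro ⟨ℓ, hl, rfl⟩
      refine ⟨⟨ℓ, rfl⟩, ?_⟩
      rintro B ⟨⟨hne, x, y, hxy, hx, hB⟩, _⟩
      have hxl : x = ℓ := by
        have hmem : x ∈ N.comp x := N.mem_comp_self x
        rw [hx, N.comp_leaf hl] at hmem
        exact hmem
      exact N.leaf_no_out hl (hxl ▸ hxy)
end
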